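/- arXiv:2305.00625 — 3 statements merged into one kernel-verified Lean document; each statement's English description precedes it below -/
import Mathlib

section
/- For every integer n ≥ 3, the sum ∑_{j=2}^{n-1} C(n,j) (j-1)^{2(j-1)} (n-j)^{2(n-j)} is at most (3/2)·e·n·(n-1)^{2(n-1)}, where C(n,j) denotes the binomial coefficient and e is Euler's number. -/
open Finset

lemma binom_bound (n j : ℕ) (hj : j ≤ n) :
    n.choose j * j ^ j * (n - j) ^ (n - j) ≤ n ^ n := by
  calc n.choose j * j ^ j * (n - j) ^ (n - j)
      = j ^ j * (n - j) ^ (n - j) * n.choose j := by ring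
    _ ≤ ∑ k ∈ range (n + 1), j ^ k * (n - j) ^ (n - k) * n.choose k :=
        Finset.single_le_sum (f := fun k => j ^ k * (n - j) ^ (n - k) * n.choose k)
          (fun i _ => Nat.zero_le _) (mem_range.mpr (Nat.lt_succ_of_le hj))
    _ = (j + (n - j)) ^ n := (add_pow j (n - j) n).symm
    _ = n ^ n := by rw [Nat.add_sub_cancel' hj]

lemma nat_term_bound (n j : ℕ) (h2 : 2 ≤ j) (hj : j ≤ n - 1) (hn : 3 ≤ n) :
    n.choose j * (j - 1) ^ (2 * (j - 1)) * (n - j) ^ (2 * (n - j)) ≤ n ^ n * (n - 1) ^ (n - 2) := by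
  set a := j - 1 with ha
  set b := n - j with hb
  have hjn : j ≤ n := le_trans hj (Nat.sub_le n 1)
  have h1 : 2 * a = (a + 1) + (a - 1) := by omega
  have h2b : a + 1 = j := by omega
  have hab : (a - 1) + b = n - 2 := by omega
  have haN : a ≤ n - 1 := by omega
  have hbN : b ≤ n - 1 := by omega
  calc n.choose j * a ^ (2 * a) * b ^ (2 * b)
      = (n.choose j * a ^ (a + 1) * b ^ b) * (a ^ (a - 1) * b ^ b) := by
        rw [h1, show 2 * b = b + b by omega, pow_add, pow_add]; ring
    _ ≤ (n.choose j * j ^ j * b ^ b) * ((n - 1) ^ (a - 1) * (n - 1) ^ b) := by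
        apply Nat.mul_le_mul
        · apply Nat.mul_le_mul_right
          apply Nat.mul_le_mul_left
          calc a ^ (a + 1) ≤ j ^ (a + 1) := Nat.pow_le_pow_left (by omega) _
            _ = j ^ j := by rw [h2b]
        · exact Nat.mul_le_mul (Nat.pow_le_pow_left (by omega) _) (Nat.pow_le_pow_left (by omega) _)
    _ = (n.choose j * j ^ j * b ^ b) * (n - 1) ^ (n - 2) := by rw [← pow_add, hab]
    _ ≤ n ^ n * (n - 1) ^ (n - 2) := by
        apply Nat.mul_le_mul_right
        have := binom_bound n j hjn
        exact this

lemma exp_pow_bound (n : ℕ) (hn : 2 ≤ n) :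
    (n : ℝ) ^ n ≤ Real.exp 1 * n * ((n : ℝ) - 1) ^ (n - 1) := by
  obtain ⟨m, rfl⟩ : ∃ m, n = m + 1 := ⟨n - 1, by omega⟩
  have hm : 1 ≤ m := by omega
  have hmR : (1 : ℝ) ≤ (m : ℝ) := by exact_mod_cast hm
  have hmpos : (0 : ℝ) < m := by linarith
  have key : ((m : ℝ) + 1) ^ m ≤ Real.exp 1 * (m : ℝ) ^ m := by
    have h1 : (m : ℝ) + 1 ≤ Real.exp (1 / m) * m := by
      have := Real.add_one_le_exp (1 / (m : ℝ))
      have h2 : (1 / (m : ℝ) + 1) * m = m + 1 := by field_simp; ring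
      nlinarith [Real.exp_pos (1 / (m : ℝ))]
    calc ((m : ℝ) + 1) ^ m ≤ (Real.exp (1 / m) * m) ^ m := by
          apply pow_le_pow_left₀ (by positivity) h1
      _ = Real.exp (1 / m) ^ m * (m : ℝ) ^ m := mul_pow _ _ _
      _ = Real.exp 1 * (m : ℝ) ^ m := by
          rw [← Real.exp_nat_mul]
          congr 1
          field_simp
  push_cast
  have hsub : ((m : ℝ) + 1) - 1 = (m : ℝ) := by ring
  rw [hsub]
  calc ((m : ℝ) + 1) ^ (m + 1) = ((m : ℝ) + 1) * ((m : ℝ) + 1) ^ m := by ring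
    _ ≤ ((m : ℝ) + 1) * (Real.exp 1 * (m : ℝ) ^ m) := by
        apply mul_le_mul_of_nonneg_left key (by linarith)
    _ = Real.exp 1 * ((m : ℝ) + 1) * (m : ℝ) ^ m := by ring

theorem stmt_0 (n : ℕ) (hn : 3 ≤ n) :
    ∑ j ∈ Finset.Icc 2 (n - 1),
      (n.choose j : ℝ) * ((j : ℝ) - 1) ^ (2 * (j - 1)) * ((n : ℝ) - (j : ℝ)) ^ (2 * (n - j))
      ≤ (3 / 2) * Real.exp 1 * n * ((n : ℝ) - 1) ^ (2 * (n - 1)) := by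
  have hnR : (3 : ℝ) ≤ (n : ℝ) := by exact_mod_cast hn
  set B : ℝ := Real.exp 1 * n * ((n : ℝ) - 1) ^ (n - 1) * ((n : ℝ) - 1) ^ (n - 2) with hB
  have hterm : ∀ j ∈ Finset.Icc 2 (n - 1),
      (n.choose j : ℝ) * ((j : ℝ) - 1) ^ (2 * (j - 1)) * ((n : ℝ) - (j : ℝ)) ^ (2 * (n - j)) ≤ B := by
    intro j hj
    rw [Finset.mem_Icc] at hj
    obtain ⟨h2, hj1⟩ := hj
    have hjn : j ≤ n := le_trans hj1 (Nat.sub_le n 1)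
    have e1 : ((j : ℝ) - 1) = ((j - 1 : ℕ) : ℝ) := by
      have : (1 : ℕ) ≤ j := by omega
      push_cast [this]; ring
    have e2 : ((n : ℝ) - (j : ℝ)) = ((n - j : ℕ) : ℝ) := by push_cast [hjn]; ring
    rw [e1, e2]
    have hnat := nat_term_bound n j h2 hj1 hn
    have hcast : (n.choose j : ℝ) * ((j - 1 : ℕ) : ℝ) ^ (2 * (j - 1)) * ((n - j : ℕ) : ℝ) ^ (2 * (n - j))
        ≤ ((n : ℝ)) ^ n * (((n - 1 : ℕ)) : ℝ) ^ (n - 2) := by exact_mod_cast hnat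
    have e3 : (((n - 1 : ℕ)) : ℝ) = (n : ℝ) - 1 := by
      have : (1 : ℕ) ≤ n := by omega
      push_cast [this]; ring
    rw [e3] at hcast
    calc (n.choose j : ℝ) * ((j - 1 : ℕ) : ℝ) ^ (2 * (j - 1)) * ((n - j : ℕ) : ℝ) ^ (2 * (n - j))
        ≤ (n : ℝ) ^ n * ((n : ℝ) - 1) ^ (n - 2) := hcast
      _ ≤ (Real.exp 1 * n * ((n : ℝ) - 1) ^ (n - 1)) * ((n : ℝ) - 1) ^ (n - 2) := by
          exact mul_le_mul_of_nonneg_right (exp_pow_bound n (by omega))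
            (pow_nonneg (by linarith) _)
      _ = B := by rw [hB]
  have hsum : ∑ j ∈ Finset.Icc 2 (n - 1),
      (n.choose j : ℝ) * ((j : ℝ) - 1) ^ (2 * (j - 1)) * ((n : ℝ) - (j : ℝ)) ^ (2 * (n - j))
      ≤ (Finset.Icc 2 (n - 1)).card • B := Finset.sum_le_card_nsmul _ _ _ hterm
  have hcard : (Finset.Icc 2 (n - 1)).card = n - 2 := by
    rw [Nat.card_Icc]; omega
  rw [hcard, nsmul_eq_mul] at hsum
  refine le_trans hsum ?_
  have hcard2 : ((n - 2 : ℕ) : ℝ) ≤ (n : ℝ) - 1 := by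
    have : ((n - 2 : ℕ) : ℝ) = (n : ℝ) - 2 := by push_cast [show (2:ℕ) ≤ n by omega]; ring
    rw [this]; linarith
  have hpow : ((n : ℝ) - 1) ^ (2 * (n - 1)) = ((n : ℝ) - 1) * (((n : ℝ) - 1) ^ (n - 1) * ((n : ℝ) - 1) ^ (n - 2)) := by
    rw [← pow_add, ← pow_succ']
    congr 1
    omega
  have hBnn : 0 ≤ B := by
    rw [hB]
    have h1 : (0:ℝ) ≤ (n : ℝ) - 1 := by linarith
    positivity
  calc ((n - 2 : ℕ) : ℝ) * B ≤ ((n : ℝ) - 1) * B := mul_le_mul_of_nonneg_right hcard2 hBnn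
    _ = Real.exp 1 * n * (((n : ℝ) - 1) * (((n : ℝ) - 1) ^ (n - 1) * ((n : ℝ) - 1) ^ (n - 2))) := by
        rw [hB]; ring
    _ ≤ (3 / 2) * Real.exp 1 * n * ((n : ℝ) - 1) ^ (2 * (n - 1)) := by
        rw [hpow]
        have h1 : (0:ℝ) ≤ (n : ℝ) - 1 := by linarith
        have h0 : (0:ℝ) ≤ Real.exp 1 * n * (((n : ℝ) - 1) * (((n : ℝ) - 1) ^ (n - 1) * ((n : ℝ) - 1) ^ (n - 2))) := by
          positivity
        nlinarith [h0]
end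

section
/- Let f : ℝ → ℝ be bounded with bounded derivative, and define for x ∈ ℝ the principal value integral (HΛ^{1/2}f)(x) = p.v. ∫_ℝ sgn(x-y)(f(x)-f(y))/|x-y|^{3/2} dy. Then for every δ > 0 and every x ∈ ℝ, |(HΛ^{1/2}f)(x)| ≤ 12 δ^{-1/2} ‖f‖_{L^∞} + 8 δ^{1/2} ‖f'‖_{L^∞}. -/
open MeasureTheory Filter Set

/-- bound for the principal-value operator HΛ^{1/2}. -/
theorem stmt_3 (f : ℝ → ℝ) (hf : Differentiable ℝ f)
    (hb : BddAbove (Set.range fun x => |f x|))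
    (hb' : BddAbove (Set.range fun x => |deriv f x|))
    (Hf : ℝ → ℝ)
    (hH : ∀ x : ℝ, Tendsto
      (fun η : ℝ => ∫ y in {y : ℝ | η < |x - y|},
        Real.sign (x - y) * (f x - f y) / |x - y| ^ (3 / 2 : ℝ))
      (nhdsWithin 0 (Set.Ioi 0)) (nhds (Hf x)))
    (δ : ℝ) (hδ : 0 < δ) (x : ℝ) :
    |Hf x| ≤ 12 * δ ^ (-(1 / 2) : ℝ) * (⨆ y, |f y|)
      + 8 * δ ^ ((1 / 2) : ℝ) * (⨆ y, |deriv f y|) := by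
  set M : ℝ := ⨆ y, |f y| with hM
  set M' : ℝ := ⨆ y, |deriv f y| with hM'
  have hMle : ∀ y, |f y| ≤ M := fun y => le_ciSup hb y
  have hM'le : ∀ y, |deriv f y| ≤ M' := fun y => le_ciSup hb' y
  have hM0 : 0 ≤ M := le_trans (abs_nonneg _) (hMle 0)
  have hM'0 : 0 ≤ M' := le_trans (abs_nonneg _) (hM'le 0)
  -- Lipschitz bound
  have hlip : ∀ a b : ℝ, |f a - f b| ≤ M' * |a - b| := by
    have hL : LipschitzWith M'.toNNReal f := by
      apply lipschitzWith_of_nnnorm_deriv_le hf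
      intro z
      rw [← NNReal.coe_le_coe, coe_nnnorm, Real.coe_toNNReal _ hM'0]
      exact hM'le z
    intro a b
    have := hL.dist_le_mul a b
    rwa [Real.dist_eq, Real.dist_eq, Real.coe_toNNReal _ hM'0] at this
  -- dominating profile
  set h : ℝ → ℝ := fun s =>
    if s ≤ δ then M' * s ^ (-(1 / 2) : ℝ) else 2 * M * s ^ (-(3 / 2) : ℝ) with hh
  have h_nonneg : ∀ s : ℝ, 0 ≤ s → 0 ≤ h s := by
    intro s hs
    rw [hh]
    dsimp only
    split_ifs
    · exact mul_nonneg hM'0 (Real.rpow_nonneg hs _)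
    · exact mul_nonneg (by linarith) (Real.rpow_nonneg hs _)
  -- integrability pieces
  have h1 : IntegrableOn h (Ioc 0 δ) := by
    have hint : IntegrableOn (fun s : ℝ => M' * s ^ (-(1 / 2) : ℝ)) (Ioc 0 δ) := by
      have := (intervalIntegral.intervalIntegrable_rpow'
        (a := 0) (b := δ) (r := -(1 / 2)) (by norm_num)).const_mul M'
      rwa [intervalIntegrable_iff_integrableOn_Ioc_of_le hδ.le] at this
    exact hint.congr_fun (fun s hs => by rw [hh]; simp [if_pos hs.2]) measurableSet_Ioc
  have h2 : IntegrableOn h (Ioi δ) := by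
    have hint : IntegrableOn (fun s : ℝ => 2 * M * s ^ (-(3 / 2) : ℝ)) (Ioi δ) :=
      (integrableOn_Ioi_rpow_of_lt (by norm_num) hδ).const_mul (2 * M)
    exact hint.congr_fun (fun s hs => by rw [hh]; simp [if_neg (not_le.mpr (mem_Ioi.mp hs))])
      measurableSet_Ioi
  have h_int : IntegrableOn h (Ioi 0) := by
    rw [← Ioc_union_Ioi_eq_Ioi hδ.le]
    exact h1.union h2
  -- values
  have e1 : ∫ s in Ioc (0 : ℝ) δ, h s = 2 * M' * δ ^ ((1 / 2) : ℝ) := by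
    rw [setIntegral_congr_fun measurableSet_Ioc
      (fun s hs => (by rw [hh]; simp [if_pos hs.2] :
        h s = M' * s ^ (-(1 / 2) : ℝ)))]
    rw [← intervalIntegral.integral_of_le hδ.le, intervalIntegral.integral_const_mul,
      integral_rpow (Or.inl (by norm_num))]
    rw [show (-(1 / 2) + 1 : ℝ) = 1 / 2 by norm_num, Real.zero_rpow (by norm_num)]
    ring
  have e2 : ∫ s in Ioi δ, h s = 4 * M * δ ^ (-(1 / 2) : ℝ) := by
    rw [setIntegral_congr_fun measurableSet_Ioi
      (fun s hs => (by rw [hh]; simp [if_neg (not_le.mpr (mem_Ioi.mp hs))] :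
        h s = 2 * M * s ^ (-(3 / 2) : ℝ)))]
    rw [integral_const_mul, integral_Ioi_rpow_of_lt (by norm_num) hδ]
    rw [show (-(3 / 2) + 1 : ℝ) = -(1 / 2) by norm_num]
    ring
  have h_intval : ∫ s in Ioi (0 : ℝ), h s
      = 2 * M' * δ ^ ((1 / 2) : ℝ) + 4 * M * δ ^ (-(1 / 2) : ℝ) := by
    rw [← Ioc_union_Ioi_eq_Ioi hδ.le,
      setIntegral_union (Ioc_disjoint_Ioi le_rfl) measurableSet_Ioi h1 h2, e1, e2]
  -- the even dominating function on ℝ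
  have int_Ioi : IntegrableOn (fun t : ℝ => h |t|) (Ioi 0) :=
    h_int.congr_fun (fun t ht => by rw [abs_of_pos ht]) measurableSet_Ioi
  have int_Iic : IntegrableOn (fun t : ℝ => h |t|) (Iic 0) := by
    rw [← Measure.map_neg_eq_self (volume : Measure ℝ)]
    have m : MeasurableEmbedding fun x : ℝ => -x := (Homeomorph.neg ℝ).measurableEmbedding
    rw [m.integrableOn_map_iff]
    simp_rw [Function.comp_def, abs_neg, neg_preimage, neg_Iic, neg_zero]
    exact Iff.mpr integrableOn_Ici_iff_integrableOn_Ioi int_Ioi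
  have hφ_int : Integrable (fun t : ℝ => h |t|) := by
    rw [← integrableOn_univ, ← Iic_union_Ioi (a := (0 : ℝ))]
    exact int_Iic.union int_Ioi
  have hφ_val : ∫ t : ℝ, h |t|
      = 4 * M' * δ ^ ((1 / 2) : ℝ) + 8 * M * δ ^ (-(1 / 2) : ℝ) := by
    rw [integral_comp_abs (f := h), h_intval]; ring
  -- pointwise bound
  have hsign : ∀ a : ℝ, |Real.sign a| ≤ 1 := by
    intro a
    rcases lt_trichotomy a 0 with h' | h' | h'
    · rw [Real.sign_of_neg h']; norm_num
    · rw [h', Real.sign_zero]; norm_num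
    · rw [Real.sign_of_pos h']; norm_num
  have key : ∀ y : ℝ, 0 < |x - y| →
      |Real.sign (x - y) * (f x - f y) / |x - y| ^ (3 / 2 : ℝ)| ≤ h |x - y| := by
    intro y hy
    have ht0 : (0 : ℝ) < |x - y| := hy
    have hp : (0 : ℝ) < |x - y| ^ (3 / 2 : ℝ) := Real.rpow_pos_of_pos ht0 _
    have habs : |Real.sign (x - y) * (f x - f y) / |x - y| ^ (3 / 2 : ℝ)|
        ≤ |f x - f y| / |x - y| ^ (3 / 2 : ℝ) := by
      rw [abs_div, abs_of_pos hp, abs_mul]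
      have hnum : |Real.sign (x - y)| * |f x - f y| ≤ |f x - f y| := by
        nlinarith [hsign (x - y), abs_nonneg (f x - f y)]
      exact div_le_div_of_nonneg_right hnum hp.le
    refine habs.trans ?_
    by_cases hc : |x - y| ≤ δ
    · rw [hh]; dsimp only; rw [if_pos hc, div_le_iff₀ hp]
      calc |f x - f y| ≤ M' * |x - y| := hlip x y
        _ = M' * |x - y| ^ (-(1 / 2) : ℝ) * |x - y| ^ (3 / 2 : ℝ) := by
            rw [mul_assoc, ← Real.rpow_add ht0]
            norm_num
    · rw [hh]; dsimp only; rw [if_neg hc, div_le_iff₀ hp]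
      calc |f x - f y| ≤ |f x| + |f y| := abs_sub (f x) (f y)
        _ ≤ 2 * M := by linarith [hMle x, hMle y]
        _ = 2 * M * |x - y| ^ (-(3 / 2) : ℝ) * |x - y| ^ (3 / 2 : ℝ) := by
            rw [mul_assoc, ← Real.rpow_add ht0]
            norm_num
  -- uniform bound for truncated integrals
  have main : ∀ η ∈ Ioi (0 : ℝ),
      |∫ y in {y : ℝ | η < |x - y|},
        Real.sign (x - y) * (f x - f y) / |x - y| ^ (3 / 2 : ℝ)|
      ≤ 4 * M' * δ ^ ((1 / 2) : ℝ) + 8 * M * δ ^ (-(1 / 2) : ℝ) := by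
    intro η hη
    set S : Set ℝ := {y : ℝ | η < |x - y|} with hS
    have hmeas : MeasurableSet S :=
      measurableSet_lt measurable_const (measurable_const.sub measurable_id).abs
    have hφint' : Integrable fun y : ℝ => h |x - y| :=
      (integrable_comp_sub_left (fun t : ℝ => h |t|) x).mpr hφ_int
    calc |∫ y in S, Real.sign (x - y) * (f x - f y) / |x - y| ^ (3 / 2 : ℝ)|
        ≤ ∫ y in S, |Real.sign (x - y) * (f x - f y) / |x - y| ^ (3 / 2 : ℝ)| := by
          simpa only [Real.norm_eq_abs] using norm_integral_le_integral_norm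
            (μ := volume.restrict S)
            (fun y => Real.sign (x - y) * (f x - f y) / |x - y| ^ (3 / 2 : ℝ))
      _ ≤ ∫ y in S, h |x - y| := by
          apply integral_mono_of_nonneg
          · exact Eventually.of_forall fun y => abs_nonneg _
          · exact hφint'.restrict
          · refine (ae_restrict_iff' hmeas).mpr (Eventually.of_forall fun y hy => ?_)
            exact key y (lt_trans hη hy)
      _ ≤ ∫ y : ℝ, h |x - y| :=
          setIntegral_le_integral hφint'
            (Eventually.of_forall fun y => h_nonneg _ (abs_nonneg _))
      _ = ∫ t : ℝ, h |t| := integral_sub_left_eq_self (fun t : ℝ => h |t|) volume x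
      _ = 4 * M' * δ ^ ((1 / 2) : ℝ) + 8 * M * δ ^ (-(1 / 2) : ℝ) := hφ_val
  have hbound := le_of_tendsto ((hH x).abs) (eventually_nhdsWithin_of_forall main)
  refine hbound.trans ?_
  have p1 : (0 : ℝ) < δ ^ (-(1 / 2) : ℝ) := Real.rpow_pos_of_pos hδ _
  have p2 : (0 : ℝ) < δ ^ ((1 / 2) : ℝ) := Real.rpow_pos_of_pos hδ _
  nlinarith [mul_nonneg p1.le hM0, mul_nonneg p2.le hM'0]
end

section
/- Let 0 < γ < 1/2, let m₁ < 0 and t₂ > t₁ with 1 + (1-γ/2) m₁ (t₂-t₁) > 0. Then (1-γ) m₁ / (1 + (1+γ/2)(1-γ) m₁ (t₂-t₁)) > (1-γ) · (m₁ / (1 + (1-γ/2) m₁ (t₂-t₁))). -/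
theorem stmt_7 (γ m₁ t₁ t₂ : ℝ) (hγ : 0 < γ) (hγ' : γ < 1 / 2) (hm : m₁ < 0)
    (ht : t₁ < t₂) (hden : 0 < 1 + (1 - γ / 2) * m₁ * (t₂ - t₁)) :
    (1 - γ) * m₁ / (1 + (1 + γ / 2) * (1 - γ) * m₁ * (t₂ - t₁))
      > (1 - γ) * (m₁ / (1 + (1 - γ / 2) * m₁ * (t₂ - t₁))) := by
  have hΔ : 0 < t₂ - t₁ := by linarith
  have hlt : 1 + (1 - γ / 2) * m₁ * (t₂ - t₁)
      < 1 + (1 + γ / 2) * (1 - γ) * m₁ * (t₂ - t₁) := by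
    nlinarith [mul_neg_of_pos_of_neg (mul_pos hγ hγ) (mul_neg_of_neg_of_pos hm hΔ)]
  have hd2 : 0 < 1 + (1 + γ / 2) * (1 - γ) * m₁ * (t₂ - t₁) := by linarith
  rw [gt_iff_lt, mul_div_assoc', div_lt_div_iff₀ hden hd2]
  exact mul_lt_mul_of_neg_left hlt (mul_neg_of_pos_of_neg (by linarith) hm)
end
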